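/- Let φ_α(z₁, z₂) = z₁² + α z₁z₂ + z₂² with α ≥ 0 and let P denote orthogonal projection of L²(T²) onto H²(T²). Then P(sgn φ_α) is a scalar multiple of φ_α if and only if α · ((1/(2π))∫₀^{2π} e^{iθ} sgn(α + 2cos θ) dθ) = (1/(2π))∫₀^{2π} sgn(α + 2cos θ) dθ. -/

import Mathlib

/-- Complex signum: `sgn w = w/|w|` for `w ≠ 0` and `sgn 0 = 0`. -/
noncomputable def csgn (w : ℂ) : ℂ := if w = 0 then 0 else w / ((‖w‖ : ℝ) : ℂ)

/-- The function `sgn φ_α` on the 2-torus, in angular coordinates. -/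
noncomputable def sgnPhi (α θ₁ θ₂ : ℝ) : ℂ :=
  csgn (Complex.exp (2 * θ₁ * Complex.I) + (α : ℂ) * Complex.exp ((θ₁ + θ₂) * Complex.I)
    + Complex.exp (2 * θ₂ * Complex.I))

/-- Fourier coefficient of `sgn φ_α` at frequency `(k₁, k₂)`. -/
noncomputable def sgnPhiCoeff (α : ℝ) (k₁ k₂ : ℤ) : ℂ :=
  ((1 / (2 * Real.pi) ^ 2 : ℝ) : ℂ) *
    ∫ θ₁ in (0:ℝ)..(2 * Real.pi), ∫ θ₂ in (0:ℝ)..(2 * Real.pi),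
      sgnPhi α θ₁ θ₂ * Complex.exp (-(((k₁ : ℝ) * θ₁ + (k₂ : ℝ) * θ₂) : ℝ) * Complex.I)

/-- Fourier coefficient of `φ_α(z) = z₁² + α z₁z₂ + z₂²` at `(k₁, k₂)`. -/
noncomputable def phiCoeff (α : ℝ) (k₁ k₂ : ℤ) : ℂ :=
  if (k₁ = 2 ∧ k₂ = 0) ∨ (k₁ = 0 ∧ k₂ = 2) then 1
  else if k₁ = 1 ∧ k₂ = 1 then (α : ℂ) else 0

open intervalIntegral

/-- the real sign function of `α + 2cos`, as a complex-valued function -/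
noncomputable def sfun (α : ℝ) (u : ℝ) : ℂ := ((Real.sign (α + 2 * Real.cos u) : ℝ) : ℂ)

/-- the one-variable Fourier-type integrals of `sfun` -/
noncomputable def Sm (α : ℝ) (m : ℤ) : ℂ :=
  ∫ u in (0:ℝ)..(2 * Real.pi), Complex.exp ((m : ℂ) * u * Complex.I) * sfun α u

lemma csgn_exp_mul_real (t r : ℝ) :
    csgn (Complex.exp ((t:ℂ) * Complex.I) * (r : ℂ))
      = Complex.exp ((t:ℂ) * Complex.I) * ((Real.sign r : ℝ) : ℂ) := by
  rcases eq_or_ne r 0 with rfl | hr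
  · simp [csgn]
  · have hne : Complex.exp ((t:ℂ) * Complex.I) * (r : ℂ) ≠ 0 :=
      mul_ne_zero (Complex.exp_ne_zero _) (by exact_mod_cast hr)
    rw [csgn, if_neg hne]
    have habs : ‖Complex.exp ((t:ℂ) * Complex.I) * (r : ℂ)‖ = |r| := by
      rw [norm_mul, Complex.norm_exp_ofReal_mul_I, Complex.norm_real, Real.norm_eq_abs, one_mul]
    rw [habs]
    have hsign : Real.sign r = r / |r| := by
      rcases lt_or_gt_of_ne hr with h | h
      · rw [Real.sign_of_neg h, abs_of_neg h]; field_simp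
      · rw [Real.sign_of_pos h, abs_of_pos h]; field_simp
    have habs0 : (|r| : ℝ) ≠ 0 := abs_ne_zero.mpr hr
    rw [hsign]
    push_cast
    field_simp

lemma sgnPhi_eq (α θ₁ θ₂ : ℝ) :
    sgnPhi α θ₁ θ₂ = Complex.exp (((θ₁ + θ₂ : ℝ) : ℂ) * Complex.I) * sfun α (θ₁ - θ₂) := by
  unfold sgnPhi sfun
  rw [← csgn_exp_mul_real]
  congr 1
  have h2c : ((2 * Real.cos (θ₁ - θ₂) : ℝ) : ℂ)
      = Complex.exp (((θ₁ - θ₂ : ℝ) : ℂ) * Complex.I)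
        + Complex.exp (-((θ₁ - θ₂ : ℝ) : ℂ) * Complex.I) := by
    rw [show ((2 * Real.cos (θ₁ - θ₂) : ℝ) : ℂ) = 2 * Complex.cos ((θ₁ - θ₂ : ℝ) : ℂ) by
      push_cast [Complex.ofReal_cos]; ring]
    exact Complex.two_cos _
  have e1 : Complex.exp (2 * (θ₁:ℂ) * Complex.I)
      = Complex.exp (((θ₁ + θ₂ : ℝ) : ℂ) * Complex.I)
        * Complex.exp (((θ₁ - θ₂ : ℝ) : ℂ) * Complex.I) := by
    rw [← Complex.exp_add]; congr 1; push_cast; ring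
  have e2 : Complex.exp (2 * (θ₂:ℂ) * Complex.I)
      = Complex.exp (((θ₁ + θ₂ : ℝ) : ℂ) * Complex.I)
        * Complex.exp (-((θ₁ - θ₂ : ℝ) : ℂ) * Complex.I) := by
    rw [← Complex.exp_add]; congr 1; push_cast; ring
  rw [e1, e2]
  push_cast [h2c]
  ring

lemma exp_int_two_pi (m : ℤ) : Complex.exp ((m : ℂ) * (2 * Real.pi) * Complex.I) = 1 := by
  rw [show (m : ℂ) * (2 * Real.pi) * Complex.I = (m : ℂ) * (2 * (Real.pi : ℂ) * Complex.I) by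
    push_cast; ring]
  exact Complex.exp_int_mul_two_pi_mul_I m

/-- Inner integral computation by change of variables and periodicity. -/
lemma inner_integral (α : ℝ) (m : ℤ) (θ₁ : ℝ) :
    (∫ θ₂ in (0:ℝ)..(2 * Real.pi), Complex.exp ((m : ℂ) * θ₂ * Complex.I) * sfun α (θ₁ - θ₂))
      = Complex.exp ((m : ℂ) * θ₁ * Complex.I) * Sm α (-m) := by
  set G : ℝ → ℂ := fun u => Complex.exp ((m : ℂ) * ((θ₁:ℂ) - (u:ℂ)) * Complex.I) * sfun α u
    with hG
  have hGper : Function.Periodic G (2 * Real.pi) := by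
    intro u
    simp only [hG]
    congr 1
    · rw [show (m : ℂ) * ((θ₁:ℂ) - ((u + 2*Real.pi : ℝ):ℂ)) * Complex.I
          = (m : ℂ) * ((θ₁:ℂ) - (u:ℂ)) * Complex.I + ((-m : ℤ) : ℂ) * (2*Real.pi) * Complex.I by
        push_cast; ring, Complex.exp_add, exp_int_two_pi, mul_one]
    · unfold sfun
      rw [Real.cos_add_two_pi]
  have step1 : (∫ θ₂ in (0:ℝ)..(2 * Real.pi), Complex.exp ((m : ℂ) * θ₂ * Complex.I)
        * sfun α (θ₁ - θ₂)) = ∫ x in (0:ℝ)..(2 * Real.pi), G (θ₁ - x) := by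
    apply intervalIntegral.integral_congr
    intro x _
    simp only [hG]
    congr 2
    push_cast
    ring
  have step2 : (∫ x in (0:ℝ)..(2 * Real.pi), G (θ₁ - x))
      = ∫ x in (θ₁ - 2 * Real.pi)..(θ₁ - 0), G x :=
    intervalIntegral.integral_comp_sub_left G θ₁
  have step3 : (∫ x in (θ₁ - 2 * Real.pi)..(θ₁ - 0), G x)
      = ∫ x in (0:ℝ)..(2 * Real.pi), G x := by
    have := hGper.intervalIntegral_add_eq (θ₁ - 2 * Real.pi) 0
    rw [show θ₁ - 2 * Real.pi + 2 * Real.pi = θ₁ - 0 by ring, zero_add] at this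
    exact this
  have step4 : (∫ x in (0:ℝ)..(2 * Real.pi), G x)
      = Complex.exp ((m : ℂ) * θ₁ * Complex.I) * Sm α (-m) := by
    rw [show (∫ x in (0:ℝ)..(2 * Real.pi), G x)
        = ∫ x in (0:ℝ)..(2 * Real.pi), Complex.exp ((m : ℂ) * θ₁ * Complex.I)
            * (Complex.exp (((-m : ℤ) : ℂ) * x * Complex.I) * sfun α x) from
      intervalIntegral.integral_congr fun x _ => by
        simp only [hG]
        rw [← mul_assoc, ← Complex.exp_add]
        congr 2
        push_cast
        ring]
    rw [intervalIntegral.integral_const_mul]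
    rfl
  rw [step1, step2, step3, step4]

/-- General formula for the Fourier coefficients of `sgn φ_α`. -/
lemma sgnPhiCoeff_eq (α : ℝ) (k₁ k₂ : ℤ) :
    sgnPhiCoeff α k₁ k₂
      = if k₁ + k₂ = 2 then ((1 / (2 * Real.pi) : ℝ) : ℂ) * Sm α (k₂ - 1) else 0 := by
  unfold sgnPhiCoeff
  have hinner : ∀ θ₁ : ℝ,
      (∫ θ₂ in (0:ℝ)..(2 * Real.pi),
        sgnPhi α θ₁ θ₂ * Complex.exp (-(((k₁ : ℝ) * θ₁ + (k₂ : ℝ) * θ₂) : ℝ) * Complex.I))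
      = Complex.exp ((((1 - k₁ : ℤ)) : ℂ) * θ₁ * Complex.I)
        * (Complex.exp ((((1 - k₂ : ℤ)) : ℂ) * θ₁ * Complex.I) * Sm α (k₂ - 1)) := by
    intro θ₁
    have step : (∫ θ₂ in (0:ℝ)..(2 * Real.pi),
        sgnPhi α θ₁ θ₂ * Complex.exp (-(((k₁ : ℝ) * θ₁ + (k₂ : ℝ) * θ₂) : ℝ) * Complex.I))
        = ∫ θ₂ in (0:ℝ)..(2 * Real.pi), Complex.exp ((((1 - k₁ : ℤ)) : ℂ) * θ₁ * Complex.I)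
            * (Complex.exp ((((1 - k₂ : ℤ)) : ℂ) * θ₂ * Complex.I) * sfun α (θ₁ - θ₂)) := by
      apply intervalIntegral.integral_congr
      intro x _
      dsimp only
      rw [sgnPhi_eq]
      have hexp : Complex.exp (((θ₁ + x : ℝ) : ℂ) * Complex.I)
            * Complex.exp (-(((k₁ : ℝ) * θ₁ + (k₂ : ℝ) * x : ℝ) : ℂ) * Complex.I)
          = Complex.exp ((((1 - k₁ : ℤ)) : ℂ) * θ₁ * Complex.I)
            * Complex.exp ((((1 - k₂ : ℤ)) : ℂ) * x * Complex.I) := by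
        rw [← Complex.exp_add, ← Complex.exp_add]
        congr 1
        push_cast
        ring
      calc Complex.exp (((θ₁ + x : ℝ) : ℂ) * Complex.I) * sfun α (θ₁ - x)
            * Complex.exp (-(((k₁ : ℝ) * θ₁ + (k₂ : ℝ) * x : ℝ) : ℂ) * Complex.I)
          = Complex.exp (((θ₁ + x : ℝ) : ℂ) * Complex.I)
            * Complex.exp (-(((k₁ : ℝ) * θ₁ + (k₂ : ℝ) * x : ℝ) : ℂ) * Complex.I)
            * sfun α (θ₁ - x) := by ring
        _ = Complex.exp ((((1 - k₁ : ℤ)) : ℂ) * θ₁ * Complex.I)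
            * Complex.exp ((((1 - k₂ : ℤ)) : ℂ) * x * Complex.I) * sfun α (θ₁ - x) := by
            rw [hexp]
        _ = Complex.exp ((((1 - k₁ : ℤ)) : ℂ) * θ₁ * Complex.I)
            * (Complex.exp ((((1 - k₂ : ℤ)) : ℂ) * x * Complex.I) * sfun α (θ₁ - x)) := by
            ring
    rw [step, intervalIntegral.integral_const_mul]
    congr 1
    have h2 := inner_integral α (1 - k₂) θ₁
    rw [show -(1 - k₂) = k₂ - 1 by ring] at h2
    exact h2
  rw [intervalIntegral.integral_congr (fun θ₁ _ => hinner θ₁)]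
  have houter : (∫ θ₁ in (0:ℝ)..(2 * Real.pi),
      Complex.exp ((((1 - k₁ : ℤ)) : ℂ) * θ₁ * Complex.I)
        * (Complex.exp ((((1 - k₂ : ℤ)) : ℂ) * θ₁ * Complex.I) * Sm α (k₂ - 1)))
      = (∫ θ₁ in (0:ℝ)..(2 * Real.pi),
          Complex.exp ((((2 - k₁ - k₂ : ℤ)) : ℂ) * Complex.I * θ₁)) * Sm α (k₂ - 1) := by
    rw [← intervalIntegral.integral_mul_const]
    apply intervalIntegral.integral_congr
    intro x _
    dsimp only
    rw [← mul_assoc, ← Complex.exp_add]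
    congr 2
    push_cast
    ring
  rw [houter]
  by_cases h : k₁ + k₂ = 2
  · have h0 : ((2 - k₁ - k₂ : ℤ) : ℂ) = 0 := by
      rw [show (2 - k₁ - k₂ : ℤ) = 0 by omega]; simp
    rw [if_pos h, h0]
    simp only [zero_mul, Complex.exp_zero]
    rw [intervalIntegral.integral_const, sub_zero, Complex.real_smul, mul_one, ← mul_assoc]
    congr 1
    have hπ : (Real.pi : ℝ) ≠ 0 := Real.pi_ne_zero
    have hπc : (Real.pi : ℂ) ≠ 0 := by exact_mod_cast hπ
    push_cast
    field_simp
  · have hc : ((2 - k₁ - k₂ : ℤ) : ℂ) * Complex.I ≠ 0 := by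
      apply mul_ne_zero _ Complex.I_ne_zero
      exact_mod_cast (by omega : (2 - k₁ - k₂ : ℤ) ≠ 0)
    rw [if_neg h, integral_exp_mul_complex hc]
    rw [show ((2 - k₁ - k₂ : ℤ) : ℂ) * Complex.I * ((2 * Real.pi : ℝ) : ℂ)
        = ((2 - k₁ - k₂ : ℤ) : ℂ) * (2 * Real.pi) * Complex.I by push_cast; ring, exp_int_two_pi]
    simp

/-- Symmetry: the `m = -1` integral equals the `m = 1` integral. -/
lemma Sm_neg_one (α : ℝ) : Sm α (-1) = Sm α 1 := by
  unfold Sm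
  have step : (∫ u in (0:ℝ)..(2 * Real.pi), Complex.exp (((-1 : ℤ) : ℂ) * u * Complex.I) * sfun α u)
      = ∫ x in (0:ℝ)..(2 * Real.pi),
          (fun u : ℝ => Complex.exp (((1 : ℤ) : ℂ) * (u : ℂ) * Complex.I) * sfun α u)
            (2 * Real.pi - x) := by
    apply intervalIntegral.integral_congr
    intro x _
    dsimp only
    have h1 : Complex.exp (((1 : ℤ) : ℂ) * ((2 * Real.pi - x : ℝ) : ℂ) * Complex.I)
        = Complex.exp (((-1 : ℤ) : ℂ) * (x : ℂ) * Complex.I) := by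
      rw [show ((1 : ℤ) : ℂ) * ((2 * Real.pi - x : ℝ) : ℂ) * Complex.I
          = ((-1 : ℤ) : ℂ) * (x : ℂ) * Complex.I + ((1 : ℤ) : ℂ) * (2 * Real.pi) * Complex.I by
        push_cast; ring, Complex.exp_add, exp_int_two_pi, mul_one]
    have h2 : sfun α (2 * Real.pi - x) = sfun α x := by
      unfold sfun; rw [Real.cos_two_pi_sub]
    rw [h1, h2]
  rw [step, intervalIntegral.integral_comp_sub_left
    (fun u : ℝ => Complex.exp (((1 : ℤ) : ℂ) * (u : ℂ) * Complex.I) * sfun α u) (2 * Real.pi)]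
  norm_num

/-- `P(sgn φ_α)` (i.e. the nonnegative-frequency part of `sgn φ_α`) is a
scalar multiple of `φ_α` iff `α·ĉ(0,2) = ĉ(1,1)`, expressed by one-variable integrals. -/
theorem projection_scalar_multiple_iff (α : ℝ) (hα : 0 ≤ α) :
    (∃ c : ℂ, ∀ k₁ k₂ : ℤ, 0 ≤ k₁ → 0 ≤ k₂ → sgnPhiCoeff α k₁ k₂ = c * phiCoeff α k₁ k₂)
      ↔ (α : ℂ) * ((1 / (2 * Real.pi) : ℂ) * ∫ θ in (0:ℝ)..(2 * Real.pi),
            Complex.exp (θ * Complex.I) * ((Real.sign (α + 2 * Real.cos θ) : ℝ) : ℂ))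
        = (1 / (2 * Real.pi) : ℂ) * ∫ θ in (0:ℝ)..(2 * Real.pi),
            ((Real.sign (α + 2 * Real.cos θ) : ℝ) : ℂ) := by
  have hcoe : (((1 / (2 * Real.pi) : ℝ)) : ℂ) = (1 / (2 * Real.pi) : ℂ) := by push_cast; ring
  have hS1 : Sm α 1 = ∫ θ in (0:ℝ)..(2 * Real.pi),
      Complex.exp (θ * Complex.I) * ((Real.sign (α + 2 * Real.cos θ) : ℝ) : ℂ) := by
    unfold Sm sfun
    apply intervalIntegral.integral_congr
    intro x _
    norm_num
  have hS0 : Sm α 0 = ∫ θ in (0:ℝ)..(2 * Real.pi),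
      ((Real.sign (α + 2 * Real.cos θ) : ℝ) : ℂ) := by
    unfold Sm sfun
    apply intervalIntegral.integral_congr
    intro x _
    norm_num
  have c02 : sgnPhiCoeff α 0 2 = ((1 / (2 * Real.pi) : ℝ) : ℂ) * Sm α 1 := by
    rw [sgnPhiCoeff_eq]; norm_num
  have c20 : sgnPhiCoeff α 2 0 = ((1 / (2 * Real.pi) : ℝ) : ℂ) * Sm α 1 := by
    rw [sgnPhiCoeff_eq]
    norm_num
    exact Sm_neg_one α
  have c11 : sgnPhiCoeff α 1 1 = ((1 / (2 * Real.pi) : ℝ) : ℂ) * Sm α 0 := by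
    rw [sgnPhiCoeff_eq]; norm_num
  constructor
  · rintro ⟨c, h⟩
    have h02 := h 0 2 (by norm_num) (by norm_num)
    have h11 := h 1 1 (by norm_num) (by norm_num)
    rw [c02] at h02
    rw [c11] at h11
    have e02 : phiCoeff α 0 2 = 1 := by norm_num [phiCoeff]
    have e11 : phiCoeff α 1 1 = (α : ℂ) := by norm_num [phiCoeff]
    rw [e02, mul_one] at h02
    rw [e11] at h11
    rw [← hS1, ← hS0, ← hcoe, h02, h11]
    ring
  · intro h
    refine ⟨((1 / (2 * Real.pi) : ℝ) : ℂ) * Sm α 1, ?_⟩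
    have hkey : ((1 / (2 * Real.pi) : ℝ) : ℂ) * Sm α 0
        = (((1 / (2 * Real.pi) : ℝ) : ℂ) * Sm α 1) * (α : ℂ) := by
      rw [hS1, hS0, hcoe]
      rw [← h]
      ring
    intro k₁ k₂ hk₁ hk₂
    by_cases hsum : k₁ + k₂ = 2
    · have hcases : (k₁ = 2 ∧ k₂ = 0) ∨ (k₁ = 1 ∧ k₂ = 1) ∨ (k₁ = 0 ∧ k₂ = 2) := by omega
      rcases hcases with ⟨rfl, rfl⟩ | ⟨rfl, rfl⟩ | ⟨rfl, rfl⟩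
      · rw [c20]
        simp [phiCoeff]
      · rw [c11, hkey]
        simp [phiCoeff]
      · rw [c02]
        simp [phiCoeff]
    · rw [sgnPhiCoeff_eq, if_neg hsum]
      have hphi : phiCoeff α k₁ k₂ = 0 := by
        unfold phiCoeff
        split_ifs with h1 h2
        · exfalso; rcases h1 with ⟨rfl, rfl⟩ | ⟨rfl, rfl⟩ <;> omega
        · exfalso; obtain ⟨rfl, rfl⟩ := h2; omega
        · rfl
      rw [hphi, mul_zero]
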